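/- Let b : (0,∞) → ℝ be non-increasing and B : [0,T] → ℝ continuous. If X, Y : [0,T] → (0,∞) are continuous and satisfy Z_t = Z_0 + ∫_0^t b(Z_s) ds + B_t for Z ∈ {X, Y} with X_0 = Y_0, then X_t = Y_t for all t ∈ [0,T]. -/
import Mathlib


open Set MeasureTheory Topology Filter

private lemma stmt12_aux (b : ℝ → ℝ) (hb : AntitoneOn b (Ioi 0))
    (T : ℝ) (_hT : 0 ≤ T)
    (X Y : ℝ → ℝ)
    (hXc : ContinuousOn X (Icc 0 T)) (hYc : ContinuousOn Y (Icc 0 T))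
    (hXpos : ∀ t ∈ Icc (0:ℝ) T, 0 < X t)
    (hYpos : ∀ t ∈ Icc (0:ℝ) T, 0 < Y t)
    (hXint : IntegrableOn (fun s => b (X s)) (Icc 0 T))
    (hYint : IntegrableOn (fun s => b (Y s)) (Icc 0 T))
    (h0 : X 0 = Y 0)
    (hD : ∀ t ∈ Icc (0:ℝ) T,
      X t - Y t = (∫ s in (0:ℝ)..t, b (X s)) - ∫ s in (0:ℝ)..t, b (Y s)) :
    ∀ t ∈ Icc (0:ℝ) T, X t ≤ Y t := by
  -- interval integrability of the two drift integrands on subintervals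
  have hIX : ∀ u v : ℝ, u ∈ Icc (0:ℝ) T → v ∈ Icc (0:ℝ) T →
      IntervalIntegrable (fun s => b (X s)) volume u v := fun u v hu hv =>
    (hXint.mono_set (uIcc_subset_Icc hu hv)).intervalIntegrable
  have hIY : ∀ u v : ℝ, u ∈ Icc (0:ℝ) T → v ∈ Icc (0:ℝ) T →
      IntervalIntegrable (fun s => b (Y s)) volume u v := fun u v hu hv =>
    (hYint.mono_set (uIcc_subset_Icc hu hv)).intervalIntegrable
  intro t0 ht0
  by_contra hlt
  push_neg at hlt
  -- the set where X ≤ Y before t0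
  set S : Set ℝ := {s | s ∈ Icc 0 t0 ∧ X s ≤ Y s} with hS
  have hSsub : S ⊆ Icc 0 t0 := fun s hs => hs.1
  have hIccsub : Icc (0:ℝ) t0 ⊆ Icc 0 T := Icc_subset_Icc le_rfl ht0.2
  have h0S : (0:ℝ) ∈ S := ⟨⟨le_rfl, ht0.1⟩, h0.le⟩
  have hSne : S.Nonempty := ⟨0, h0S⟩
  have hSbdd : BddAbove S := ⟨t0, fun s hs => hs.1.2⟩
  have hSclosed : IsClosed S := by
    have hc : ContinuousOn (fun s => Y s - X s) (Icc 0 t0) :=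
      (hYc.mono hIccsub).sub (hXc.mono hIccsub)
    have : S = Icc 0 t0 ∩ (fun s => Y s - X s) ⁻¹' Ici 0 := by
      ext s
      simp only [hS, mem_setOf_eq, mem_inter_iff, mem_preimage, mem_Ici, sub_nonneg]
    rw [this]
    exact hc.preimage_isClosed_of_isClosed isClosed_Icc isClosed_Ici
  set s0 := sSup S with hs0def
  have hs0S : s0 ∈ S := hSclosed.csSup_mem hSne hSbdd
  have hs0Icc : s0 ∈ Icc 0 t0 := hs0S.1
  have hs0T : s0 ∈ Icc (0:ℝ) T := hIccsub hs0Icc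
  have hs0lt : s0 < t0 := by
    rcases lt_or_eq_of_le hs0Icc.2 with h | h
    · exact h
    · exact absurd (h ▸ hs0S.2) (not_le.mpr hlt)
  -- strict inequality on (s0, t0]
  have hstrict : ∀ s ∈ Ioc s0 t0, Y s < X s := by
    intro s hs
    by_contra hle
    push_neg at hle
    have : s ∈ S := ⟨⟨le_trans hs0Icc.1 hs.1.le, hs.2⟩, hle⟩
    exact absurd (le_csSup hSbdd this) (not_le.mpr hs.1)
  -- by continuity, X s0 = Y s0
  have heq0 : X s0 = Y s0 := by
    refine le_antisymm hs0S.2 ?_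
    have hne : (𝓝[Ioc s0 t0] s0).NeBot := left_nhdsWithin_Ioc_neBot hs0lt
    have hsub : Ioc s0 t0 ⊆ Icc 0 T := fun s hs =>
      hIccsub ⟨le_trans hs0Icc.1 hs.1.le, hs.2⟩
    have hXt : Filter.Tendsto X (𝓝[Ioc s0 t0] s0) (𝓝 (X s0)) :=
      (hXc s0 hs0T).mono hsub
    have hYt : Filter.Tendsto Y (𝓝[Ioc s0 t0] s0) (𝓝 (Y s0)) :=
      (hYc s0 hs0T).mono hsub
    exact le_of_tendsto_of_tendsto hYt hXt
      (eventually_mem_nhdsWithin.mono fun s hs => (hstrict s hs).le)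
  -- on [s0, t0] we have Y ≤ X, hence b ∘ X ≤ b ∘ Y
  have hmono : ∀ s ∈ Icc s0 t0, b (X s) ≤ b (Y s) := by
    intro s hs
    have hsT : s ∈ Icc (0:ℝ) T := hIccsub ⟨le_trans hs0Icc.1 hs.1, hs.2⟩
    rcases eq_or_lt_of_le hs.1 with h | h
    · rw [← h, heq0]
    · exact hb (hYpos s hsT) (hXpos s hsT) (hstrict s ⟨h, hs.2⟩).le
  -- key identity: X t0 - Y t0 = ∫_{s0}^{t0} b(X) - ∫_{s0}^{t0} b(Y)
  have h0T : (0:ℝ) ∈ Icc (0:ℝ) T := ⟨le_rfl, ht0.1.trans ht0.2⟩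
  have ht0T : t0 ∈ Icc (0:ℝ) T := ht0
  have hkey : X t0 - Y t0 =
      (∫ s in s0..t0, b (X s)) - ∫ s in s0..t0, b (Y s) := by
    have e1 := hD t0 ht0T
    have e2 := hD s0 hs0T
    have eX := intervalIntegral.integral_interval_sub_left
      (hIX 0 t0 h0T ht0T) (hIX 0 s0 h0T hs0T)
    have eY := intervalIntegral.integral_interval_sub_left
      (hIY 0 t0 h0T ht0T) (hIY 0 s0 h0T hs0T)
    have : X s0 - Y s0 = 0 := by rw [heq0]; ring
    rw [this] at e2
    rw [← eX, ← eY]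
    linarith
  have hle : (∫ s in s0..t0, b (X s)) ≤ ∫ s in s0..t0, b (Y s) :=
    intervalIntegral.integral_mono_on hs0lt.le
      (hIX s0 t0 hs0T ht0T) (hIY s0 t0 hs0T ht0T) hmono
  linarith

/-- Deterministic uniqueness for ODEs with non-increasing drift perturbed by a
fixed continuous path: if `b` is non-increasing on `(0, ∞)` and `X, Y` are
continuous strictly positive solutions of `Z t = Z 0 + ∫₀ᵗ b (Z s) ds + B t`
on `[0, T]` with the same initial value, then `X = Y` on `[0, T]`. -/
theorem stmt12 (b : ℝ → ℝ) (hb : AntitoneOn b (Ioi 0))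
    (T : ℝ) (hT : 0 ≤ T) (B : ℝ → ℝ) (hB : ContinuousOn B (Icc 0 T))
    (X Y : ℝ → ℝ)
    (hXc : ContinuousOn X (Icc 0 T)) (hYc : ContinuousOn Y (Icc 0 T))
    (hXpos : ∀ t ∈ Icc (0:ℝ) T, 0 < X t)
    (hYpos : ∀ t ∈ Icc (0:ℝ) T, 0 < Y t)
    (hXint : IntegrableOn (fun s => b (X s)) (Icc 0 T))
    (hYint : IntegrableOn (fun s => b (Y s)) (Icc 0 T))
    (h0 : X 0 = Y 0)
    (hXeq : ∀ t ∈ Icc (0:ℝ) T, X t = X 0 + (∫ s in (0:ℝ)..t, b (X s)) + B t)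
    (hYeq : ∀ t ∈ Icc (0:ℝ) T, Y t = Y 0 + (∫ s in (0:ℝ)..t, b (Y s)) + B t) :
    ∀ t ∈ Icc (0:ℝ) T, X t = Y t := by
  have hD : ∀ t ∈ Icc (0:ℝ) T,
      X t - Y t = (∫ s in (0:ℝ)..t, b (X s)) - ∫ s in (0:ℝ)..t, b (Y s) := by
    intro t ht
    have := hXeq t ht
    have := hYeq t ht
    linarith [hXeq t ht, hYeq t ht]
  have hD' : ∀ t ∈ Icc (0:ℝ) T,
      Y t - X t = (∫ s in (0:ℝ)..t, b (Y s)) - ∫ s in (0:ℝ)..t, b (X s) := by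
    intro t ht
    linarith [hD t ht]
  intro t ht
  exact le_antisymm
    (stmt12_aux b hb T hT X Y hXc hYc hXpos hYpos hXint hYint h0 hD t ht)
    (stmt12_aux b hb T hT Y X hYc hXc hYpos hXpos hYint hXint h0.symm hD' t ht)
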